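/- Let G be an abelian group and g ∈ G a nonzero element. Suppose that for all subgroups H, K of G with g ∉ H and g ∉ K, one has g ∉ H + K. Then for every pair of group homomorphisms f : G → K₀ and h : G → L₀ into abelian groups with f(g) ≠ 0 and h(g) ≠ 0, there exist an abelian group D, an element d ∈ D with d ≠ 0, and homomorphisms f' : K₀ → D, h' : L₀ → D such that f'(f(g)) = d = h'(h(g)) and f' ∘ f = h' ∘ h. -/
import Mathlib


theorem stmt2 {G : Type} [AddCommGroup G] (g : G) (hg : g ≠ 0)
    (hyp : ∀ H K : AddSubgroup G, g ∉ H → g ∉ K → g ∉ H ⊔ K) :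
    ∀ (K₀ L₀ : Type) (_ : AddCommGroup K₀) (_ : AddCommGroup L₀)
      (f : G →+ K₀) (h : G →+ L₀), f g ≠ 0 → h g ≠ 0 →
      ∃ (D : Type) (_ : AddCommGroup D) (d : D) (f' : K₀ →+ D) (h' : L₀ →+ D),
        d ≠ 0 ∧ f' (f g) = d ∧ h' (h g) = d ∧ f'.comp f = h'.comp h := by
  intro K₀ L₀ _ _ f h hf hh
  set N : AddSubgroup (K₀ × L₀) := (f.prod (-h)).range with hN
  refine ⟨(K₀ × L₀) ⧸ N, inferInstance,
    QuotientAddGroup.mk' N (f g, 0),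
    (QuotientAddGroup.mk' N).comp (AddMonoidHom.inl K₀ L₀),
    (QuotientAddGroup.mk' N).comp (AddMonoidHom.inr K₀ L₀), ?_, rfl, ?_, ?_⟩
  · intro hd
    rw [QuotientAddGroup.mk'_apply, QuotientAddGroup.eq_zero_iff] at hd
    obtain ⟨x, hx⟩ := hd
    simp only [AddMonoidHom.prod_apply, AddMonoidHom.neg_apply, Prod.ext_iff] at hx
    obtain ⟨hx1, hx2⟩ := hx
    apply hyp f.ker h.ker (by simpa [AddMonoidHom.mem_ker] using hf)
      (by simpa [AddMonoidHom.mem_ker] using hh)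
    have hgx : g = (g - x) + x := by abel
    rw [hgx]
    exact AddSubgroup.add_mem_sup (by simp [AddMonoidHom.mem_ker, hx1])
      (by simp [AddMonoidHom.mem_ker, neg_eq_zero.mp hx2])
  · rw [AddMonoidHom.comp_apply]
    rw [QuotientAddGroup.mk'_apply, QuotientAddGroup.mk'_apply, QuotientAddGroup.eq]
    exact ⟨g, by simp⟩
  · ext x
    rw [AddMonoidHom.comp_apply, AddMonoidHom.comp_apply, AddMonoidHom.comp_apply,
      AddMonoidHom.comp_apply, QuotientAddGroup.mk'_apply, QuotientAddGroup.mk'_apply,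
      QuotientAddGroup.eq]
    exact ⟨-x, by simp⟩
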